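/- arXiv:2510.23518 — 2 statements merged into one kernel-verified Lean document; each statement's English description precedes it below -/
import Mathlib

section
/- Let S be a ring, P a projective S-module, and M ≤ P an S-submodule. Suppose S embeds into an Artinian ring D such that the image of the induced map D ⊗_S M → D ⊗_S P has finite length as a D-module. Then M is contained in a finitely generated S-submodule of P. -/
/-!
STATEMENT 0: Let `S` be a ring, `P` a projective `S`-module, and `M ≤ P` an
`S`-submodule.  Suppose `S` embeds into an Artinian ring `D` such that the image
of the induced map `D ⊗_S M → D ⊗_S P` has finite length as a `D`-module.  Then
`M` is contained in a finitely generated `S`-submodule of `P`.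

(The embedding `S → D` is encoded as an injective algebra map, and the induced
map `D ⊗_S M → D ⊗_S P` is the base change of the inclusion `M ↪ P`.)
-/

open TensorProduct in
theorem stmt0 (S : Type*) [CommRing S] (D : Type*) [Ring D] [Algebra S D]
    [IsArtinianRing D] (hinj : Function.Injective (algebraMap S D))
    (P : Type*) [AddCommGroup P] [Module S P] [Module.Projective S P]
    (M : Submodule S P)
    (hlen : IsFiniteLength D (LinearMap.range (LinearMap.baseChange D M.subtype))) :
    ∃ N : Submodule S P, N.FG ∧ M ≤ N := by
  classical
  obtain ⟨ι, hι⟩ := (Module.projective_def (R := S) (P := P)).mp ‹_›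
  set Q := LinearMap.range (LinearMap.baseChange D M.subtype) with hQ
  have hQfg : Q.FG := by
    have h1 : IsNoetherian D Q := (isFiniteLength_iff_isNoetherian_isArtinian.mp hlen).1
    have h2 : Module.Finite D Q := ⟨IsNoetherian.noetherian ⊤⟩
    exact Module.Finite.iff_fg.mp h2
  obtain ⟨T, hT⟩ := hQfg
  -- the S-linear "coordinates" map
  let χ : D ⊗[S] P → (P →₀ D) := fun q =>
    TensorProduct.finsuppScalarRight S S D P
      ((LinearMap.baseChange D ι) q)
  have hχ_tmul : ∀ (d : D) (x : P) (p : P), χ (d ⊗ₜ[S] x) p = algebraMap S D (ι x p) * d := by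
    intro d x p
    simp [χ, LinearMap.baseChange_tmul, TensorProduct.finsuppScalarRight_apply_tmul_apply,
      Algebra.smul_def]
  have hχ_add : ∀ q q' (p : P), χ (q + q') p = χ q p + χ q' p := by
    intro q q' p
    simp only [χ, map_add, LinearEquiv.map_add, Finsupp.add_apply]
  have hχ_smul : ∀ (d : D) (q : D ⊗[S] P) (p : P), χ (d • q) p = d * χ q p := by
    intro d q p
    induction q using TensorProduct.induction_on with
    | zero =>
        simp only [χ, smul_zero, map_zero, LinearEquiv.map_zero, Finsupp.zero_apply, mul_zero]
    | tmul d' x =>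
        rw [TensorProduct.smul_tmul', smul_eq_mul, hχ_tmul, hχ_tmul,
          ← mul_assoc, ← mul_assoc, Algebra.commutes]
    | add q1 q2 h1 h2 =>
        rw [smul_add, hχ_add, hχ_add, h1, h2, mul_add]
  let J : Finset P := T.sup fun t => (χ t).support
  refine ⟨Submodule.span S (J : Set P), Submodule.fg_span J.finite_toSet, ?_⟩
  intro m hm
  have h1m : (1 : D) ⊗ₜ[S] m ∈ Q :=
    ⟨(1 : D) ⊗ₜ[S] (⟨m, hm⟩ : M), by simp [LinearMap.baseChange_tmul]⟩
  have key : ∀ p : P, p ∉ J → ι m p = 0 := by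
    intro p hp
    -- D-linear evaluation map
    let L : D ⊗[S] P →ₗ[D] D :=
      { toFun := fun q => χ q p
        map_add' := fun q q' => hχ_add q q' p
        map_smul' := fun d q => hχ_smul d q p }
    have hTL : (T : Set (D ⊗[S] P)) ⊆ (LinearMap.ker L : Set (D ⊗[S] P)) := by
      intro t ht
      have hsub : (χ t).support ⊆ J := Finset.le_sup (f := fun t => (χ t).support) ht
      have : p ∉ (χ t).support := fun h => hp (hsub h)
      simpa [L, LinearMap.mem_ker] using Finsupp.notMem_support_iff.mp this
    have hQL : Q ≤ LinearMap.ker L := by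
      rw [← hT]; exact Submodule.span_le.mpr hTL
    have h0 : χ ((1 : D) ⊗ₜ[S] m) p = 0 := hQL h1m
    rw [hχ_tmul, mul_one] at h0
    exact hinj (by simpa using h0)
  have hmrep : Finsupp.linearCombination S (id : P → P) (ι m) = m := hι m
  rw [← hmrep, Finsupp.linearCombination_apply]
  refine Submodule.sum_mem _ ?_
  intro p hpsup
  have hpJ : p ∈ J := by
    by_contra h
    exact Finsupp.mem_support_iff.mp hpsup (key p h)
  exact Submodule.smul_mem _ _ (Submodule.subset_span hpJ)
end

section
/- Let (G, X) be a group pair with cd_K(G, X) ≤ 2 over a field K, with T a complete set of representatives of non-regular orbits. Let t₁, t₂ ∈ T and g ∈ G, and suppose either t₁ ≠ t₂ or g ∉ G_{t₂}. Then the subgroup H = G_{t₁} ∩ g⁻¹G_{t₂}g satisfies cd_K(H) ≤ 1, i.e., Ext²_{K[H]}(K, L) = 0 for every K[H]-module L. -/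
set_option synthInstance.maxHeartbeats 1000000

open MonoidAlgebra

namespace GPaper

variable (R : Type*) [CommRing R] (G : Type*) [Group G]

/-- The permutation representation on `X →₀ R` (Mathlib's old `Representation.ofMulAction`). -/
noncomputable def permRep (X : Type*) [MulAction G X] : Representation R G (X →₀ R) where
  toFun g := Finsupp.lmapDomain R R (g • ·)
  map_one' := by ext x y; simp
  map_mul' x y := by ext z w; simp [mul_smul, ← Finsupp.mapDomain_comp, Function.comp_def]

/-- The permutation module `R[X]` of a `G`-set `X`, as a module over `MonoidAlgebra R G`. -/
noncomputable abbrev permMod (X : Type*) [MulAction G X] :=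
  (permRep R G X).asModule

/-- The trivial module `R` over `MonoidAlgebra R G`. -/
noncomputable abbrev trivMod := (Representation.trivial R (G := G) (V := R)).asModule


noncomputable instance permModAddCommGroup (X : Type*) [MulAction G X] :
    AddCommGroup (permMod R G X) :=
  inferInstanceAs (AddCommGroup (X →₀ R))

noncomputable instance trivModAddCommGroup : AddCommGroup (trivMod R G) :=
  inferInstanceAs (AddCommGroup R)

/-- A `G`-equivariant `R`-linear map between representations induces a
`MonoidAlgebra R G`-linear map between the associated modules. -/
noncomputable def eqvLinear {V W : Type*} [AddCommMonoid V] [Module R V]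
    [AddCommMonoid W] [Module R W]
    (ρ : Representation R G V) (σ : Representation R G W) (f : V →ₗ[R] W)
    (hf : ∀ g v, f (ρ g v) = σ g (f v)) :
    ρ.asModule →ₗ[MonoidAlgebra R G] σ.asModule where
  toFun := f
  map_add' := f.map_add
  map_smul' := by
    intro r m
    have key : ∀ (r : MonoidAlgebra R G) (v : V),
        f (ρ.asAlgebraHom r v) = σ.asAlgebraHom r (f v) := by
      intro r
      induction r using MonoidAlgebra.induction_linear with
      | zero => intro v; simp
      | add a b ha hb => intro v; simp [map_add, ha v, hb v]
      | single g c =>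
        intro v
        simp only [Representation.asAlgebraHom_single, LinearMap.smul_apply, map_smul]
        exact congrArg _ (hf g v)
    have h1 : (r • m : ρ.asModule) = (ρ.asAlgebraHom r) m := ρ.asModuleEquiv_map_smul r m
    have h2 : ∀ y : σ.asModule, (r • y : σ.asModule) = (σ.asAlgebraHom r) y :=
      fun y => σ.asModuleEquiv_map_smul r y
    simp only [RingHom.id_apply]
    rw [h1, h2 (f m)]
    exact key r m

/-- The augmentation map `R[X] → R` as a map of `MonoidAlgebra R G`-modules. -/
noncomputable def augLin (X : Type*) [MulAction G X] :
    permMod R G X →ₗ[MonoidAlgebra R G] trivMod R G :=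
  eqvLinear R G _ _ (Finsupp.linearCombination R fun _ : X => (1 : R)) (by
    intro g v
    show Finsupp.linearCombination R (fun _ : X => (1:R))
        (Finsupp.mapDomain (g • ·) v) = _
    rw [Finsupp.linearCombination_mapDomain]
    rfl)

/-- The augmentation module `ω_R(X)` of the group pair `(G, X)`. -/
noncomputable def omegaMod (X : Type*) [MulAction G X] :
    Submodule (MonoidAlgebra R G) (permMod R G X) :=
  LinearMap.ker (augLin R G X)

/-- A `G`-map of `G`-sets induces a `MonoidAlgebra R G`-linear map of permutation
modules. -/
noncomputable def permMap {X Y : Type*} [MulAction G X] [MulAction G Y] (f : X → Y)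
    (hf : ∀ (g : G) (x : X), f (g • x) = g • f x) :
    permMod R G X →ₗ[MonoidAlgebra R G] permMod R G Y :=
  eqvLinear R G _ _ (Finsupp.lmapDomain R R f) (by
    intro g v
    show Finsupp.mapDomain f (Finsupp.mapDomain (g • ·) v)
        = Finsupp.mapDomain (g • ·) (Finsupp.mapDomain f v)
    rw [← Finsupp.mapDomain_comp, ← Finsupp.mapDomain_comp]
    congr 1
    funext x
    exact hf g x)

end GPaper

namespace Stmt16Aux
open Module LinearMap
section HomAlg
variable {R : Type*} [Ring R] {M A P P₂ : Type*}
  [AddCommGroup M] [Module R M] [AddCommGroup A] [Module R A]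
  [AddCommGroup P] [Module R P] [AddCommGroup P₂] [Module R P₂]

/-- kernel of a surjection from a projective onto a projective is projective -/
theorem ker_proj (f : P →ₗ[R] M) (hf : Function.Surjective f)
    [Module.Projective R P] [Module.Projective R M] :
    Module.Projective R (ker f) := by
  obtain ⟨s, hs⟩ := Module.projective_lifting_property f LinearMap.id hf
  have hs' : ∀ x, f (s x) = x := fun x => congrArg (fun g => g x) hs
  let d : P →ₗ[R] P := LinearMap.id - s ∘ₗ f
  have hmem : ∀ c : P, d c ∈ ker f := by
    intro c
    simp [d, LinearMap.mem_ker, map_sub, hs' (f c)]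
  refine Module.Projective.of_split (ker f).subtype
    (d.codRestrict (ker f) hmem) ?_
  apply LinearMap.ext
  rintro ⟨x, hx⟩
  apply Subtype.ext
  have hx' : f x = 0 := hx
  simp [d, LinearMap.codRestrict, hx']

/-- Schanuel-lite: if `M` has one projective presentation with projective kernel,
then any projective presentation has projective kernel. -/
theorem schanuel (f : P →ₗ[R] M) (hf : Function.Surjective f)
    (g : P₂ →ₗ[R] M) (hg : Function.Surjective g)
    [Module.Projective R P] [Module.Projective R P₂]
    (hker : Module.Projective R (ker f)) :
    Module.Projective R (ker g) := by
  classical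
  set Z : Submodule R (P × P₂) := ker (f ∘ₗ LinearMap.fst R P P₂ - g ∘ₗ LinearMap.snd R P P₂)
    with hZ
  have hZmem : ∀ z : P × P₂, z ∈ Z ↔ f z.1 = g z.2 := by
    intro z; simp [hZ, LinearMap.mem_ker, sub_eq_zero]
  let π₂ : Z →ₗ[R] P₂ := (LinearMap.snd R P P₂) ∘ₗ Z.subtype
  have hπ₂ : Function.Surjective π₂ := by
    intro y
    obtain ⟨x, hx⟩ := hf (g y)
    exact ⟨⟨(x, y), (hZmem _).2 hx⟩, rfl⟩
  -- ker π₂ ≃ ker f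
  have hkπ₂ : Module.Projective R (ker π₂) := by
    have hmem : ∀ z : ker π₂, ((z : Z) : P × P₂).1 ∈ ker f := by
      rintro ⟨⟨⟨a, b⟩, hab⟩, hb⟩
      have h1 : f a = g b := (hZmem _).1 hab
      have h2 : b = 0 := hb
      simp [LinearMap.mem_ker, h1, h2]
    let m₁ : ker π₂ →ₗ[R] ker f :=
      ((LinearMap.fst R P P₂ ∘ₗ Z.subtype) ∘ₗ (ker π₂).subtype).codRestrict (ker f) hmem
    have hbij : Function.Bijective m₁ := by
      constructor
      · rintro ⟨⟨⟨a, b⟩, hab⟩, hb⟩ ⟨⟨⟨a', b'⟩, hab'⟩, hb'⟩ h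
        have ha : a = a' := congrArg Subtype.val h
        have hb2 : b = 0 := hb
        have hb2' : b' = 0 := hb'
        subst ha hb2 hb2'
        rfl
      · rintro ⟨x, hx⟩
        refine ⟨⟨⟨(x, 0), (hZmem _).2 ?_⟩, ?_⟩, rfl⟩
        · have : f x = 0 := hx
          simp [this]
        · rfl
    exact Module.Projective.of_equiv (LinearEquiv.ofBijective m₁ hbij).symm
  -- split π₂ to show Z projective
  obtain ⟨s₂, hs₂⟩ := Module.projective_lifting_property π₂ LinearMap.id hπ₂
  have hs₂' : ∀ y, π₂ (s₂ y) = y := fun y => congrArg (fun h => h y) hs₂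
  have hZproj : Module.Projective R Z := by
    let m₂ : (P₂ × ker π₂) →ₗ[R] Z := LinearMap.coprod s₂ (ker π₂).subtype
    have hbij : Function.Bijective m₂ := by
      constructor
      · rintro ⟨y, z, hz⟩ ⟨y', z', hz'⟩ h
        have h0 : s₂ y + z = s₂ y' + z' := h
        have hzz : π₂ z = 0 := hz
        have hzz' : π₂ z' = 0 := hz'
        have hy : y = y' := by
          have := congrArg π₂ h0
          simpa [map_add, hs₂', hzz, hzz'] using this
        subst hy
        have : z = z' := by
          have := add_left_cancel h0
          exact this
        subst this
        rfl
      · intro z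
        refine ⟨(π₂ z, ⟨z - s₂ (π₂ z), ?_⟩), ?_⟩
        · simp [LinearMap.mem_ker, map_sub, hs₂']
        · show s₂ (π₂ z) + (z - s₂ (π₂ z)) = z
          abel
    exact Module.Projective.of_equiv (LinearEquiv.ofBijective m₂ hbij)
  -- ker g ≃ ker π₁
  let π₁ : Z →ₗ[R] P := (LinearMap.fst R P P₂) ∘ₗ Z.subtype
  have hπ₁ : Function.Surjective π₁ := by
    intro x
    obtain ⟨y, hy⟩ := hg (f x)
    exact ⟨⟨(x, y), (hZmem _).2 hy.symm⟩, rfl⟩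
  have hkπ₁ : Module.Projective R (ker π₁) := ker_proj π₁ hπ₁
  have hmem : ∀ z : ker π₁, ((z : Z) : P × P₂).2 ∈ ker g := by
    rintro ⟨⟨⟨a, b⟩, hab⟩, ha⟩
    have h1 : f a = g b := (hZmem _).1 hab
    have h2 : a = 0 := ha
    have : g b = 0 := by rw [← h1, h2, map_zero]
    simpa [LinearMap.mem_ker] using this
  let mg : ker π₁ →ₗ[R] ker g :=
    ((LinearMap.snd R P P₂ ∘ₗ Z.subtype) ∘ₗ (ker π₁).subtype).codRestrict (ker g) hmem
  have hbij : Function.Bijective mg := by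
    constructor
    · rintro ⟨⟨⟨a, b⟩, hab⟩, ha⟩ ⟨⟨⟨a', b'⟩, hab'⟩, ha'⟩ h
      have hbb : b = b' := congrArg Subtype.val h
      have ha2 : a = 0 := ha
      have ha2' : a' = 0 := ha'
      subst hbb ha2 ha2'
      rfl
    · rintro ⟨y, hy⟩
      refine ⟨⟨⟨(0, y), (hZmem _).2 ?_⟩, ?_⟩, rfl⟩
      · have : g y = 0 := hy
        simp [this]
      · rfl
  exact Module.Projective.of_equiv (LinearEquiv.ofBijective mg hbij)

/-- A split quotient of a module of projective dimension ≤ 1 (presented by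
`f` with projective kernel) again has such a presentation, via `φ ∘ f`. -/
theorem split_quotient_pd_one (f : P →ₗ[R] M) (hf : Function.Surjective f)
    [Module.Projective R P] (hker : Module.Projective R (ker f))
    (φ : M →ₗ[R] A) (σ : A →ₗ[R] M) (hφσ : φ ∘ₗ σ = LinearMap.id) :
    Function.Surjective (φ ∘ₗ f) ∧ Module.Projective R (ker (φ ∘ₗ f)) := by
  have hφσ' : ∀ a, φ (σ a) = a := fun a => congrArg (fun h => h a) hφσ
  have hφsurj : Function.Surjective (φ ∘ₗ f) := by
    intro a
    obtain ⟨x, hx⟩ := hf (σ a)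
    exact ⟨x, by simp [hx, hφσ']⟩
  refine ⟨hφsurj, ?_⟩
  -- the big presentation g : P × P → M
  let g : (P × P) →ₗ[R] M :=
    ((σ ∘ₗ φ ∘ₗ f) ∘ₗ LinearMap.fst R P P) + ((f - σ ∘ₗ φ ∘ₗ f) ∘ₗ LinearMap.snd R P P)
  have hgapp : ∀ x y, g (x, y) = σ (φ (f x)) + (f y - σ (φ (f y))) := fun x y => rfl
  have hgsurj : Function.Surjective g := by
    intro m
    obtain ⟨x, hx⟩ := hf m
    exact ⟨(x, x), by rw [hgapp, hx]; abel⟩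
  have hkerg : Module.Projective R (ker g) := schanuel f hf g hgsurj hker
  -- ker (φ ∘ f) is a split summand of ker g
  have hmem₁ : ∀ x : ker (φ ∘ₗ f), ((x : P), (0 : P)) ∈ ker g := by
    rintro ⟨x, hx⟩
    have hx' : φ (f x) = 0 := hx
    simp [LinearMap.mem_ker, hgapp, hx']
  have hmem₂ : ∀ z : ker g, ((z : P × P).1) ∈ ker (φ ∘ₗ f) := by
    rintro ⟨⟨x, y⟩, hxy⟩
    have h0 : σ (φ (f x)) + (f y - σ (φ (f y))) = 0 := hxy
    have := congrArg φ h0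
    simp only [map_add, map_sub, hφσ', map_zero] at this
    have : φ (f x) = 0 := by
      rw [show φ (f x) + (φ (f y) - φ (f y)) = φ (f x) by abel] at this
      exact this
    simpa [LinearMap.mem_ker] using this
  let i : ker (φ ∘ₗ f) →ₗ[R] ker g :=
    (LinearMap.prod (ker (φ ∘ₗ f)).subtype 0).codRestrict (ker g) (by
      rintro ⟨x, hx⟩
      exact hmem₁ ⟨x, hx⟩)
  let r : ker g →ₗ[R] ker (φ ∘ₗ f) :=
    ((LinearMap.fst R P P) ∘ₗ (ker g).subtype).codRestrict (ker (φ ∘ₗ f)) hmem₂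
  have hri : r ∘ₗ i = LinearMap.id := by
    apply LinearMap.ext
    rintro ⟨x, hx⟩
    rfl
  exact Module.Projective.of_split i r hri

end HomAlg

section Res
variable {R S : Type*} [Semiring R] [Semiring S]

/-- Restriction of scalars along a ring hom, as a type synonym. -/
def Res (_ : R →+* S) (M : Type*) := M

instance (j : R →+* S) (M) [AddCommMonoid M] : AddCommMonoid (Res j M) :=
  inferInstanceAs (AddCommMonoid M)

instance (j : R →+* S) (M) [AddCommGroup M] : AddCommGroup (Res j M) :=
  inferInstanceAs (AddCommGroup M)

instance (j : R →+* S) (M) [AddCommMonoid M] [Module S M] : Module R (Res j M) :=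
  Module.compHom M j

theorem res_smul_def (j : R →+* S) {M} [AddCommMonoid M] [Module S M] (r : R) (x : Res j M) :
    r • x = (j r • (show M from x) : M) := rfl

/-- Restriction of a linear map. -/
def resMap (j : R →+* S) {M N} [AddCommMonoid M] [Module S M] [AddCommMonoid N] [Module S N]
    (f : M →ₗ[S] N) : Res j M →ₗ[R] Res j N where
  toFun := f
  map_add' := f.map_add
  map_smul' := fun r x => f.map_smul (j r) x

theorem finsupp_projective {ι M : Type*} [AddCommMonoid M] [Module R M]
    [Module.Projective R M] : Module.Projective R (ι →₀ M) := by
  classical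
  exact Module.Projective.of_equiv (finsuppLequivDFinsupp (R := R) (M := M) (ι := ι)).symm

/-- Restriction of scalars preserves projectivity provided `S` restricts to a
projective `R`-module. -/
theorem res_projective (j : R →+* S) {M : Type*} [AddCommMonoid M] [Module S M]
    (hM : Module.Projective S M) (hS : Module.Projective R (Res j S)) :
    Module.Projective R (Res j M) := by
  obtain ⟨s, hs⟩ := Module.projective_def.1 hM
  let E : Res j (M →₀ S) ≃ₗ[R] (M →₀ Res j S) :=
    { toFun := fun v => v
      map_add' := fun a b => rfl
      map_smul' := fun r v => by
        ext m
        rfl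
      invFun := fun v => v
      left_inv := fun v => rfl
      right_inv := fun v => rfl }
  have : Module.Projective R (M →₀ Res j S) := finsupp_projective
  refine Module.Projective.of_split (E.toLinearMap ∘ₗ resMap j s)
    (resMap j (Finsupp.linearCombination S id) ∘ₗ E.symm.toLinearMap) ?_
  apply LinearMap.ext
  intro x
  exact hs x

end Res

section GroupFree
variable (k : Type*) [CommRing k] {G : Type*} [Group G] (H : Subgroup G)

/-- The orbit space of `H` acting on `G` by left multiplication. -/
noncomputable def cosetEquiv :
    (MulAction.orbitRel.Quotient H G × H) ≃ G := by
  classical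
  refine Equiv.ofBijective (fun x => (x.2 : G) * x.1.out) ⟨?_, ?_⟩
  · rintro ⟨q, h⟩ ⟨q', h'⟩ hx
    simp only at hx
    have hq : q = q' := by
      have h1 : (Quotient.mk _ ((h : G) * q.out) : MulAction.orbitRel.Quotient H G)
          = Quotient.mk _ q.out := Quotient.sound ⟨h, rfl⟩
      have h1' : (Quotient.mk _ ((h' : G) * q'.out) : MulAction.orbitRel.Quotient H G)
          = Quotient.mk _ q'.out := Quotient.sound ⟨h', rfl⟩
      have := h1.symm.trans ((congrArg _ hx).trans h1')
      simpa [Quotient.out_eq] using this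
    subst hq
    have : (h : G) = h' := mul_right_cancel hx
    exact Prod.ext rfl (Subtype.ext this)
  · intro g
    obtain ⟨h, hh⟩ : (Quotient.mk _ g : MulAction.orbitRel.Quotient H G).out
        ∈ MulAction.orbit H g := by
      exact Quotient.mk_out (s := MulAction.orbitRel H G) g
    refine ⟨(Quotient.mk _ g, h⁻¹), ?_⟩
    simp only
    have hh' : (h : G) * g = (Quotient.mk _ g : MulAction.orbitRel.Quotient H G).out := hh
    rw [← hh', ← mul_assoc]
    simp

/-- The underlying equiv `k[G] ≃ (Q →₀ k[H])`. -/
noncomputable def resFreeEquiv₀ :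
    MonoidAlgebra k G ≃ (MulAction.orbitRel.Quotient H G →₀ MonoidAlgebra k H) :=
  (MonoidAlgebra.coeffEquiv.trans ((Finsupp.equivCongrLeft (cosetEquiv H).symm).trans
    Finsupp.finsuppProdEquiv)).trans (Finsupp.mapRange.equiv MonoidAlgebra.coeffEquiv.symm rfl)

theorem resFreeEquiv₀_apply (v : MonoidAlgebra k G)
    (q : MulAction.orbitRel.Quotient H G) (h : H) :
    (resFreeEquiv₀ k H v q).coeff h = v.coeff (cosetEquiv H (q, h)) := by
  show (Finsupp.curry ((Finsupp.equivCongrLeft (cosetEquiv H).symm) v.coeff)) q h = _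
  rw [Finsupp.curry_apply]
  rw [Finsupp.equivCongrLeft_apply, Finsupp.equivMapDomain_apply]
  simp

theorem resFreeEquiv₀_add (u v : MonoidAlgebra k G) :
    resFreeEquiv₀ k H (u + v) = resFreeEquiv₀ k H u + resFreeEquiv₀ k H v := by
  ext q : 1
  apply MonoidAlgebra.coeff_injective
  ext h
  calc (resFreeEquiv₀ k H (u + v) q).coeff h = (u + v).coeff (cosetEquiv H (q, h)) :=
        resFreeEquiv₀_apply k H (u + v) q h
    _ = u.coeff (cosetEquiv H (q, h)) + v.coeff (cosetEquiv H (q, h)) := rfl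
    _ = (resFreeEquiv₀ k H u q).coeff h + (resFreeEquiv₀ k H v q).coeff h := by
        rw [resFreeEquiv₀_apply, resFreeEquiv₀_apply]
    _ = ((resFreeEquiv₀ k H u + resFreeEquiv₀ k H v) q).coeff h := rfl

theorem resFreeEquiv₀_smul (r : MonoidAlgebra k H) (v : MonoidAlgebra k G) :
    resFreeEquiv₀ k H (MonoidAlgebra.mapDomainRingHom k H.subtype r * v)
      = r • resFreeEquiv₀ k H v := by
  induction r using MonoidAlgebra.induction_linear with
  | zero => ext q : 1; apply MonoidAlgebra.coeff_injective; ext h; simp [resFreeEquiv₀_apply]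
  | add a b ha hb =>
      rw [map_add, add_mul, resFreeEquiv₀_add, ha, hb, add_smul]
  | single h c =>
      ext q : 1
      apply MonoidAlgebra.coeff_injective
      ext h'
      have hmap : MonoidAlgebra.mapDomainRingHom k H.subtype
          (MonoidAlgebra.single h c) = MonoidAlgebra.single (h : G) c := by
        simp [MonoidAlgebra.mapDomainRingHom, Finsupp.mapDomain_single]
      rw [hmap]
      rw [resFreeEquiv₀_apply]
      rw [MonoidAlgebra.coeff_single_mul_apply]
      have h1 : (cosetEquiv H (q, h')) = (h' : G) * q.out := rfl
      rw [h1]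
      have h2 : ((MonoidAlgebra.single h c • resFreeEquiv₀ k H v) q).coeff h'
          = (MonoidAlgebra.single h c * (resFreeEquiv₀ k H v q)).coeff h' := rfl
      rw [h2, MonoidAlgebra.coeff_single_mul_apply, resFreeEquiv₀_apply]
      have h3 : (cosetEquiv H (q, h⁻¹ * h')) = ((h⁻¹ * h' : H) : G) * q.out := rfl
      rw [h3]
      simp [mul_assoc]

/-- `k[G]`, as a `k[H]`-module via restriction, is isomorphic to a free module. -/
noncomputable def resFreeEquiv :
    Res (MonoidAlgebra.mapDomainRingHom k H.subtype) (MonoidAlgebra k G)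
      ≃ₗ[MonoidAlgebra k H] (MulAction.orbitRel.Quotient H G →₀ MonoidAlgebra k H) where
  toFun := resFreeEquiv₀ k H
  invFun := (resFreeEquiv₀ k H).symm
  left_inv := (resFreeEquiv₀ k H).left_inv
  right_inv := (resFreeEquiv₀ k H).right_inv
  map_add' := resFreeEquiv₀_add k H
  map_smul' := fun r v => resFreeEquiv₀_smul k H r v

theorem resS_projective :
    Module.Projective (MonoidAlgebra k H)
      (Res (MonoidAlgebra.mapDomainRingHom k H.subtype) (MonoidAlgebra k G)) :=
  Module.Projective.of_equiv (resFreeEquiv k H).symm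

end GroupFree
end Stmt16Aux


/-!
STATEMENT 16: Let `(G, X)` be a group pair with `cd_K(G, X) ≤ 2` over a field
`K` (i.e. `ω_K(X)` has projective dimension at most 1 over `K[G]`), with `T` a
complete set of representatives of non-regular orbits.  Let `t₁, t₂ ∈ T` and
`g ∈ G` with `t₁ ≠ t₂` (representatives of distinct orbits) or `g ∉ G_{t₂}`.
Then `H = G_{t₁} ∩ g⁻¹ G_{t₂} g` satisfies `cd_K(H) ≤ 1`, i.e. the trivial
`K[H]`-module `K` has projective dimension at most 1.
-/

universe u

/-- The projective dimension of the `S`-module `M` is at most `n`. -/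
def ProjDimLE (S : Type u) [Ring S] :
    ℕ → ∀ (M : Type u) [AddCommGroup M] [Module S M], Prop
  | 0, M, _, _ => Module.Projective S M
  | (n+1), M, _, _ => ∃ (ι : Type u) (p : Submodule S (ι →₀ S)),
      Module.Projective S ↥p ∧ ∃ f : ↥p →ₗ[S] M, Function.Surjective f ∧
        ProjDimLE S n ↥((LinearMap.ker f).map p.subtype)


namespace Stmt16Aux
open Module LinearMap

theorem projDimLE_one_of (R : Type u) [Ring R] (M : Type u) [AddCommGroup M] [Module R M]
    (P : Type u) [AddCommGroup P] [Module R P] [hP : Module.Projective R P]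
    (f : P →ₗ[R] M) (hf : Function.Surjective f)
    (hker : Module.Projective R (LinearMap.ker f)) : ProjDimLE R 1 M := by
  obtain ⟨s, hs⟩ := Module.projective_def.1 hP
  have hsinj : Function.Injective s := hs.injective
  let p : Submodule R (P →₀ R) := LinearMap.range s
  let e : P ≃ₗ[R] p := LinearEquiv.ofInjective s hsinj
  have hpproj : Module.Projective R p := Module.Projective.of_equiv e
  let f' : ↥p →ₗ[R] M := f ∘ₗ (e.symm : ↥p →ₗ[R] P)
  have hf' : Function.Surjective f' := by
    intro m
    obtain ⟨x, hx⟩ := hf m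
    exact ⟨e x, by simp [f', hx]⟩
  have hk : LinearMap.ker f' = (LinearMap.ker f).map (e : P →ₗ[R] ↥p) := by
    ext x
    simp only [LinearMap.mem_ker, Submodule.mem_map, f', LinearMap.comp_apply,
      LinearEquiv.coe_coe]
    constructor
    · intro hx
      exact ⟨e.symm x, hx, by simp⟩
    · rintro ⟨y, hy, rfl⟩
      simp [hy]
  have hkerproj : Module.Projective R ↥((LinearMap.ker f').map p.subtype) := by
    haveI := hker
    have eA : ↥(LinearMap.ker f) ≃ₗ[R] ↥((LinearMap.ker f).map (e : P →ₗ[R] ↥p)) :=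
      Submodule.equivMapOfInjective (e : P →ₗ[R] ↥p) e.injective _
    have eB : ↥((LinearMap.ker f).map (e : P →ₗ[R] ↥p)) ≃ₗ[R] ↥(LinearMap.ker f') :=
      LinearEquiv.ofEq _ _ hk.symm
    have eC : ↥(LinearMap.ker f') ≃ₗ[R] ↥((LinearMap.ker f').map p.subtype) :=
      Submodule.equivMapOfInjective p.subtype (Submodule.injective_subtype p) _
    exact Module.Projective.of_equiv (eA.trans (eB.trans eC))
  exact ⟨P, p, hpproj, f', hf', hkerproj⟩

/-- Packaged version: a split quotient of a module with a length-one projective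
presentation has projective dimension at most one. -/
theorem pd_one_package (R : Type u) [Ring R] (M A P : Type u)
    [AddCommGroup M] [Module R M] [AddCommGroup A] [Module R A]
    [AddCommGroup P] [Module R P] [Module.Projective R P]
    (f : P →ₗ[R] M) (hf : Function.Surjective f)
    (hker : Module.Projective R (LinearMap.ker f))
    (φ : M →ₗ[R] A) (σ : A →ₗ[R] M) (hφσ : φ ∘ₗ σ = LinearMap.id) :
    ProjDimLE R 1 A := by
  obtain ⟨h1, h2⟩ := split_quotient_pd_one f hf hker φ σ hφσ
  exact projDimLE_one_of R A P (φ ∘ₗ f) h1 h2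

end Stmt16Aux

set_option maxHeartbeats 4000000 in
theorem stmt16 (K : Type u) [Field K] (G : Type u) [Group G]
    (X : Type u) [MulAction G X] [Nonempty X]
    (x₀ : X) (hreg : MulAction.stabilizer G x₀ = ⊥)
    -- `cd_K(G, X) ≤ 2`:
    (hcd : ProjDimLE (MonoidAlgebra K G) 1 ↥(GPaper.omegaMod K G X))
    -- `t₁, t₂` lie in non-regular orbits:
    (t₁ t₂ : X) (ht₁ : t₁ ∉ MulAction.orbit G x₀) (ht₂ : t₂ ∉ MulAction.orbit G x₀)
    (g : G)
    -- either `t₁, t₂` represent distinct orbits, or `g ∉ G_{t₂}`: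
    (hcase : (¬ ∃ h : G, h • t₁ = t₂) ∨ (t₁ = t₂ ∧ g ∉ MulAction.stabilizer G t₂))
    -- `H = G_{t₁} ∩ g⁻¹ G_{t₂} g`:
    (H : Subgroup G)
    (hH : H = MulAction.stabilizer G t₁ ⊓
      (MulAction.stabilizer G t₂).map (MulAut.conj g⁻¹).toMonoidHom) :
    ProjDimLE (MonoidAlgebra K ↥H) 1 (GPaper.trivMod K ↥H) := by
  classical
  set s : X := g⁻¹ • t₂ with hs_def
  -- every element of H fixes both t₁ and s
  have hfix : ∀ h : G, h ∈ H → h • t₁ = t₁ ∧ h • s = s := by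
    intro h hh
    rw [hH, Subgroup.mem_inf] at hh
    obtain ⟨h1, h2⟩ := hh
    refine ⟨MulAction.mem_stabilizer_iff.mp h1, ?_⟩
    obtain ⟨kk, hk, rfl⟩ := Subgroup.mem_map.1 h2
    have hkk : kk • t₂ = t₂ := MulAction.mem_stabilizer_iff.mp hk
    have hconj : ((MulAut.conj g⁻¹).toMonoidHom kk : G) = g⁻¹ * kk * g := by
      simp [MulAut.conj_apply]
    rw [hconj, hs_def, smul_smul]
    have hgrp : g⁻¹ * kk * g * g⁻¹ = g⁻¹ * kk := by group
    rw [hgrp, ← smul_smul, hkk]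
  have hts : t₁ ≠ s := by
    intro hEq
    rcases hcase with hc | ⟨hteq, hg⟩
    · refine hc ⟨g, ?_⟩
      rw [hEq, hs_def]
      simp
    · apply hg
      have hgt : g • t₁ = t₂ := by
        rw [hEq, hs_def]; simp
      rw [hteq] at hgt
      exact MulAction.mem_stabilizer_iff.mpr hgt
  have ht1fix : ∀ h : ↥H, h • t₁ = t₁ := fun h => (hfix _ h.2).1
  have hsfix : ∀ h : ↥H, h • s = s := fun h => (hfix _ h.2).2
  let j : MonoidAlgebra K ↥H →+* MonoidAlgebra K G :=
    MonoidAlgebra.mapDomainRingHom K H.subtype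
  -- extract the projective presentation of ω over K[G]
  have hcd' : ∃ (ι : Type u) (p : Submodule (MonoidAlgebra K G) (ι →₀ (MonoidAlgebra K G))),
      Module.Projective (MonoidAlgebra K G) ↥p ∧ ∃ f : ↥p →ₗ[(MonoidAlgebra K G)] ↥(GPaper.omegaMod K G X),
        Function.Surjective f ∧
          Module.Projective (MonoidAlgebra K G) ↥((LinearMap.ker f).map p.subtype) := hcd
  obtain ⟨ι, p, hp, f, hf, hker0⟩ := hcd'
  have hkerf : Module.Projective (MonoidAlgebra K G) ↥(LinearMap.ker f) := by
    haveI := hker0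
    exact Module.Projective.of_equiv
      (Submodule.equivMapOfInjective p.subtype (Submodule.injective_subtype p)
        (LinearMap.ker f)).symm
  -- restriction of scalars
  haveI hSres : Module.Projective (MonoidAlgebra K ↥H) (Stmt16Aux.Res j (MonoidAlgebra K G)) := Stmt16Aux.resS_projective K H
  haveI hPres : Module.Projective (MonoidAlgebra K ↥H) (Stmt16Aux.Res j ↥p) := Stmt16Aux.res_projective j hp hSres
  -- compatibility of the two module structures on K[X]
  have key : ∀ (r : (MonoidAlgebra K ↥H)) (v : GPaper.permMod K G X),
      (GPaper.permRep K G X).asAlgebraHom (j r) v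
        = (GPaper.permRep K ↥H X).asAlgebraHom r v := by
    intro r v
    induction r using MonoidAlgebra.induction_linear with
    | zero => simp
    | add a b ha hb => simp only [map_add]; exact congrArg₂ (· + ·) ha hb
    | single h c =>
      have hmap : j (MonoidAlgebra.single h c) = MonoidAlgebra.single (h : G) c := by
        simp [j, MonoidAlgebra.mapDomainRingHom, Finsupp.mapDomain_single]
      rw [hmap, Representation.asAlgebraHom_single, Representation.asAlgebraHom_single]
      rfl
  -- the carriers of ω over G and over H agree
  have hmemiff : ∀ v : GPaper.permMod K G X,
      v ∈ GPaper.omegaMod K G X ↔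
        (show GPaper.permMod K ↥H X from v) ∈ GPaper.omegaMod K ↥H X := by
    intro v
    constructor <;> intro hv <;> exact hv
  let eω : Stmt16Aux.Res j ↥(GPaper.omegaMod K G X) ≃ₗ[(MonoidAlgebra K ↥H)] ↥(GPaper.omegaMod K ↥H X) :=
    { toFun := fun w => ⟨(show ↥(GPaper.omegaMod K G X) from w).1,
        (hmemiff _).1 (show ↥(GPaper.omegaMod K G X) from w).2⟩
      map_add' := fun a b => rfl
      map_smul' := fun r w =>
        Subtype.ext (key r (show ↥(GPaper.omegaMod K G X) from w).1)
      invFun := fun w => (⟨w.1, (hmemiff _).2 w.2⟩ : ↥(GPaper.omegaMod K G X))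
      left_inv := fun w => rfl
      right_inv := fun w => rfl }
  -- the evaluation-at-t₁ map on the H-permutation module
  let ev : GPaper.permMod K ↥H X →ₗ[(MonoidAlgebra K ↥H)] GPaper.trivMod K ↥H :=
    GPaper.eqvLinear K ↥H _ _ (Finsupp.lapply t₁) (by
      intro h v
      show ((GPaper.permRep K ↥H X) h v) t₁ = _
      have := Finsupp.mapDomain_apply (MulAction.injective h) v t₁
      rw [ht1fix h] at this
      exact this)
  -- the section of the evaluation map
  let σ0 : GPaper.trivMod K ↥H →ₗ[(MonoidAlgebra K ↥H)] GPaper.permMod K ↥H X :=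
    GPaper.eqvLinear K ↥H _ _ (Finsupp.lsingle t₁ - Finsupp.lsingle s) (by
      intro h v
      show Finsupp.single t₁ v - Finsupp.single s v
          = (GPaper.permRep K ↥H X) h (Finsupp.single t₁ v - Finsupp.single s v)
      have hps : ∀ (x : X) (r : K), (GPaper.permRep K ↥H X) h (Finsupp.single x r)
          = Finsupp.single (h • x) r := fun x r => Finsupp.mapDomain_single
      rw [map_sub, hps, hps,
        ht1fix h, hsfix h])
  have hσmem : ∀ c : GPaper.trivMod K ↥H, σ0 c ∈ GPaper.omegaMod K ↥H X := by
    intro c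
    show Finsupp.linearCombination K (fun _ : X => (1 : K))
        (Finsupp.single t₁ (show K from c) - Finsupp.single s (show K from c)) = 0
    rw [map_sub, Finsupp.linearCombination_single, Finsupp.linearCombination_single, sub_self]
  let σ : GPaper.trivMod K ↥H →ₗ[(MonoidAlgebra K ↥H)] ↥(GPaper.omegaMod K ↥H X) :=
    σ0.codRestrict _ hσmem
  let φ : ↥(GPaper.omegaMod K ↥H X) →ₗ[(MonoidAlgebra K ↥H)] GPaper.trivMod K ↥H :=
    ev ∘ₗ (GPaper.omegaMod K ↥H X).subtype
  have hφσ : φ ∘ₗ σ = LinearMap.id := by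
    apply LinearMap.ext
    intro c
    show (Finsupp.single t₁ c - Finsupp.single s c) t₁ = c
    rw [Finsupp.sub_apply, Finsupp.single_eq_same, Finsupp.single_eq_of_ne hts,
      sub_zero]
  -- the restricted presentation
  let fres : Stmt16Aux.Res j ↥p →ₗ[(MonoidAlgebra K ↥H)] Stmt16Aux.Res j ↥(GPaper.omegaMod K G X) :=
    Stmt16Aux.resMap j f
  have hfres : Function.Surjective fres := hf
  let f' : Stmt16Aux.Res j ↥p →ₗ[(MonoidAlgebra K ↥H)] ↥(GPaper.omegaMod K ↥H X) :=
    (eω : Stmt16Aux.Res j ↥(GPaper.omegaMod K G X) →ₗ[(MonoidAlgebra K ↥H)] ↥(GPaper.omegaMod K ↥H X)) ∘ₗ fres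
  have hf' : Function.Surjective f' := by
    intro w
    obtain ⟨x, hx⟩ := hfres (eω.symm w)
    refine ⟨x, ?_⟩
    show eω (fres x) = w
    rw [hx]
    exact eω.apply_symm_apply w
  have hkerf' : Module.Projective (MonoidAlgebra K ↥H) ↥(LinearMap.ker f') := by
    have hkk : LinearMap.ker f' = LinearMap.ker fres := by
      ext x
      constructor
      · intro hx
        have hx' : eω (fres x) = 0 := hx
        have h2 := congrArg eω.symm hx'
        simpa using h2
      · intro hx
        have hx' : fres x = 0 := hx
        show eω (fres x) = 0
        rw [hx', map_zero]
    rw [hkk]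
    haveI : Module.Projective (MonoidAlgebra K ↥H) (Stmt16Aux.Res j ↥(LinearMap.ker f)) :=
      Stmt16Aux.res_projective j hkerf hSres
    exact Module.Projective.of_equiv (M := Stmt16Aux.Res j ↥(LinearMap.ker f))
      ({toFun := fun x => ⟨(show ↥(LinearMap.ker f) from x).1,
          (show ↥(LinearMap.ker f) from x).2⟩
        map_add' := fun a b => rfl
        map_smul' := fun r x => rfl
        invFun := fun x => (⟨x.1, x.2⟩ : ↥(LinearMap.ker f))
        left_inv := fun x => rfl
        right_inv := fun x => rfl } :
        Stmt16Aux.Res j ↥(LinearMap.ker f) ≃ₗ[MonoidAlgebra K ↥H] ↥(LinearMap.ker fres))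
  exact Stmt16Aux.pd_one_package (MonoidAlgebra K ↥H) _ (GPaper.trivMod K ↥H)
    (Stmt16Aux.Res j ↥p) f' hf' hkerf' φ σ hφσ
end
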